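/- The nonempty unbordered factors of the infinite Fibonacci word f are exactly of the lengths F_n for n ≥ 2; for each n ≥ 2 there are exactly two unbordered factors of length F_n, and for each n ≥ 3 these two unbordered factors are reversals of each other. -/

import Mathlib

/-- The Fibonacci morphism φ: 0 ↦ 01, 1 ↦ 0. -/
def fibPhi (w : List ℕ) : List ℕ := (w.map (fun c => if c = 0 then [0, 1] else [0])).flatten

/-- The infinite Fibonacci word f = 0100101001001⋯, the fixed point of φ starting with 0. -/
def fibWord (i : ℕ) : ℕ := ((fibPhi^[i + 2]) [0]).getD i 0

/-- A finite word is a factor of the infinite Fibonacci word. -/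
def IsFibFactor (x : List ℕ) : Prop :=
  ∃ i : ℕ, x = (List.range x.length).map (fun t => fibWord (i + t))

/-- x has a border: a nonempty word that is both a proper prefix and a
proper suffix of x. -/
def HasBorder (x : List ℕ) : Prop :=
  ∃ y : List ℕ, y ≠ [] ∧ y.length < x.length ∧ y <+: x ∧ y <:+ x

namespace FibAux

theorem fibPhi_nil : fibPhi [] = [] := rfl

theorem fibPhi_cons (c : ℕ) (w : List ℕ) :
    fibPhi (c :: w) = (if c = 0 then [0,1] else [0]) ++ fibPhi w := by
  simp [fibPhi]

theorem fibPhi_append (a b : List ℕ) : fibPhi (a ++ b) = fibPhi a ++ fibPhi b := by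
  simp [fibPhi]

def fw (n : ℕ) : List ℕ := fibPhi^[n] [0]

theorem fw_zero : fw 0 = [0] := rfl

theorem fw_succ (n : ℕ) : fw (n+1) = fibPhi (fw n) :=
  Function.iterate_succ_apply' _ _ _

theorem fibPhi_ne_nil {w : List ℕ} (h : w ≠ []) : fibPhi w ≠ [] := by
  cases w with
  | nil => exact absurd rfl h
  | cons c w' =>
    rw [fibPhi_cons]
    rcases em (c = 0) with h0 | h0 <;> simp [h0]

theorem phi_one_iter (n : ℕ) : fibPhi^[n+1] [1] = fw n := by
  rw [Function.iterate_succ_apply]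
  rfl

theorem phi_one_ne_nil (n : ℕ) : fibPhi^[n] [1] ≠ [] := by
  cases n with
  | zero => simp
  | succ m =>
    rw [phi_one_iter]
    induction m with
    | zero => simp [fw_zero]
    | succ k ih => rw [fw_succ]; exact fibPhi_ne_nil ih

theorem fw_ne_nil (n : ℕ) : fw n ≠ [] := by
  induction n with
  | zero => simp [fw_zero]
  | succ k ih => rw [fw_succ]; exact fibPhi_ne_nil ih

theorem iter_append (n : ℕ) : ∀ a b : List ℕ, fibPhi^[n] (a ++ b) = fibPhi^[n] a ++ fibPhi^[n] b := by
  induction n with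
  | zero => intro a b; rfl
  | succ k ih =>
    intro a b
    simp only [Function.iterate_succ_apply, fibPhi_append, ih]

theorem fw_append (n : ℕ) : fw (n+1) = fw n ++ fibPhi^[n] [1] := by
  have : fw (n+1) = fibPhi^[n] ([0] ++ [1]) := by
    rw [fw, Function.iterate_succ_apply]; rfl
  rw [this, iter_append]; rfl

theorem fw_prefix_succ (n : ℕ) : fw n <+: fw (n+1) :=
  ⟨fibPhi^[n] [1], (fw_append n).symm⟩

theorem fw_prefix {m k : ℕ} (h : m ≤ k) : fw m <+: fw k := by
  induction k with
  | zero => cases Nat.le_zero.mp h; exact List.prefix_refl _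
  | succ k ih =>
    rcases Nat.lt_or_ge m (k+1) with h' | h'
    · exact (ih (Nat.lt_succ_iff.mp h')).trans (fw_prefix_succ k)
    · cases Nat.le_antisymm h h'; exact List.prefix_refl _

theorem le_length_fw (n : ℕ) : n + 1 ≤ (fw n).length := by
  induction n with
  | zero => simp [fw_zero]
  | succ k ih =>
    rw [fw_append, List.length_append]
    have := List.length_pos_iff.mpr (phi_one_ne_nil k)
    omega

theorem fibWord_eq {k i : ℕ} (h : i < (fw k).length) : fibWord i = (fw k)[i] := by
  have h2 : i < (fw (i+2)).length := lt_of_lt_of_le (by omega) (le_length_fw (i+2))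
  have e1 : fibWord i = (fw (i+2))[i] := by
    rw [fibWord, ← List.getD_eq_getElem _ 0 h2]; rfl
  rcases le_total (i+2) k with hle | hle
  · rw [e1, (fw_prefix hle).getElem h2]
  · rw [e1]; exact ((fw_prefix hle).getElem h).symm

theorem slice_factor {x : List ℕ} {i k : ℕ}
    (hx : x = ((fw k).drop i).take x.length) :
    x = (List.range x.length).map (fun t => fibWord (i + t)) := by
  have hlen : x.length ≤ (fw k).length - i := by
    conv_lhs => rw [hx]
    simp
  apply List.ext_getElem
  · simp
  · intro t h1 h2
    simp only [List.getElem_map, List.getElem_range]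
    have hit : i + t < (fw k).length := by omega
    rw [fibWord_eq hit, List.getElem_of_eq hx h1, List.getElem_take, List.getElem_drop]

theorem isFactor_iff {x : List ℕ} : IsFibFactor x ↔ ∃ k, x <:+: fw k := by
  constructor
  · rintro ⟨i, hx⟩
    set K := i + x.length with hK
    refine ⟨K, ?_⟩
    have hlen : i + x.length ≤ (fw K).length :=
      le_of_lt (lt_of_lt_of_le (by omega) (le_length_fw _))
    have hx' : ∀ t (ht : t < x.length), x[t] = fibWord (i + t) := by
      intro t ht
      rw [List.getElem_of_eq hx ht]
      simp
    have hsl : x = ((fw K).drop i).take x.length := by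
      apply List.ext_getElem
      · simp; omega
      · intro t h1 h2
        rw [hx' t h1, List.getElem_take, List.getElem_drop]
        exact fibWord_eq (by omega)
    rw [hsl]
    exact (List.take_prefix _ _).isInfix.trans (List.drop_suffix _ _).isInfix
  · rintro ⟨k, l, r, hk⟩
    refine ⟨l.length, slice_factor (k := k) ?_⟩
    rw [← hk, List.append_assoc, List.drop_left, List.take_left]

theorem mem_fibPhi {c : ℕ} {w : List ℕ} (h : c ∈ fibPhi w) : c = 0 ∨ c = 1 := by
  simp only [fibPhi, List.mem_flatten, List.mem_map] at h
  obtain ⟨a, ⟨b, hb, rfl⟩, hc⟩ := h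
  split_ifs at hc <;> simp at hc <;> omega

theorem mem_fw {c : ℕ} {k : ℕ} (h : c ∈ fw k) : c = 0 ∨ c = 1 := by
  induction k with
  | zero => left; simpa [fw_zero] using h
  | succ m ih => rw [fw_succ] at h; exact mem_fibPhi h

theorem phi_factor {x : List ℕ} {k : ℕ} (h : x <:+: fw k) : fibPhi x <:+: fw (k+1) := by
  obtain ⟨l, r, hk⟩ := h
  exact ⟨fibPhi l, fibPhi r, by rw [fw_succ, ← hk, fibPhi_append, fibPhi_append]⟩

theorem length_fibPhi_ge (w : List ℕ) : w.length ≤ (fibPhi w).length := by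
  induction w with
  | nil => simp [fibPhi_nil]
  | cons c w' ih =>
    rw [fibPhi_cons, List.length_append]
    split_ifs <;> simp <;> omega

theorem count0_fibPhi (w : List ℕ) : (fibPhi w).count 0 = w.length := by
  induction w with
  | nil => simp [fibPhi_nil]
  | cons c w' ih =>
    rw [fibPhi_cons, List.count_append, ih]
    split_ifs <;> simp [List.count_cons] <;> omega

theorem length_fibPhi (w : List ℕ) : (fibPhi w).length = w.length + w.count 0 := by
  induction w with
  | nil => simp [fibPhi_nil]
  | cons c w' ih =>
    rw [fibPhi_cons, List.length_append, ih, List.count_cons]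
    by_cases h : c = 0 <;> simp [h] <;> omega

theorem phiR (w : List ℕ) : (fibPhi w ++ [0]).reverse = fibPhi w.reverse ++ [0] := by
  induction w with
  | nil => rfl
  | cons c w' ih =>
    rw [fibPhi_cons, List.append_assoc, List.reverse_append, ih, List.reverse_cons,
      fibPhi_append]
    rcases em (c = 0) with h | h <;>
      simp [fibPhi_cons, fibPhi_nil, h]

def dpal : ℕ → List ℕ
  | 0 => []
  | (n+1) => fibPhi (dpal n) ++ [0]

theorem dpal_palindrome (n : ℕ) : (dpal n).reverse = dpal n := by
  induction n with
  | zero => rfl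
  | succ m ih => rw [dpal, phiR, ih]

theorem dpal_length_ge (n : ℕ) : n ≤ (dpal n).length := by
  induction n with
  | zero => simp
  | succ m ih =>
    rw [dpal, List.length_append]
    have := length_fibPhi_ge (dpal m)
    simp; omega

theorem fw_eq_dpal (n : ℕ) :
    fw (n+1) = dpal n ++ (if n % 2 = 0 then [0, 1] else [1, 0]) := by
  induction n with
  | zero => rfl
  | succ m ih =>
    rw [fw_succ, ih, fibPhi_append]
    rcases Nat.even_or_odd m with h | h
    · have h0 : m % 2 = 0 := Nat.even_iff.mp h
      have h1 : (m+1) % 2 = 1 := by omega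
      simp only [h0, h1, if_pos rfl]
      norm_num
      rw [dpal]
      simp [fibPhi_cons, fibPhi_nil]
    · have h0 : m % 2 = 1 := Nat.odd_iff.mp h
      have h1 : (m+1) % 2 = 0 := by omega
      simp only [h0, h1]
      norm_num
      rw [dpal]
      simp [fibPhi_cons, fibPhi_nil]

theorem reverse_factor {x : List ℕ} (h : ∃ k, x <:+: fw k) :
    ∃ k, x.reverse <:+: fw k := by
  obtain ⟨k, hk⟩ := h
  set m := (fw k).length with hm
  have hk1 : fw k <+: fw (m+1) := fw_prefix (by have := le_length_fw k; omega)
  have hd : dpal m <+: fw (m+1) := ⟨_, (fw_eq_dpal m).symm⟩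
  have h1 : fw k <+: dpal m := by
    rcases List.prefix_or_prefix_of_prefix hk1 hd with h | h
    · exact h
    · have h2 : (dpal m).length ≤ m := hm ▸ h.length_le
      have h3 := dpal_length_ge m
      rw [h.eq_of_length (by omega)]
    
  refine ⟨m+1, ?_⟩
  have h2 : x.reverse <:+: (dpal m).reverse :=
    List.reverse_infix.mpr (hk.trans h1.isInfix)
  rw [dpal_palindrome] at h2
  exact h2.trans hd.isInfix

theorem getLast?_append' {l₁ l₂ : List ℕ} (h : l₂ ≠ []) :
    (l₁ ++ l₂).getLast? = l₂.getLast? := by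
  rw [List.getLast?_append]
  cases h2 : l₂.getLast? with
  | none => exact absurd (List.getLast?_eq_none_iff.mp h2) h
  | some c => rfl

theorem pre_desub : ∀ (w x r : List ℕ), x.getLast? = some 1 → fibPhi w = x ++ r →
    ∃ y, y <+: w ∧ x = fibPhi y := by
  intro w
  induction w with
  | nil =>
    intro x r hl he
    have hx : x = [] := (List.append_eq_nil_iff.mp he.symm).1
    rw [hx] at hl; simp at hl
  | cons c w' ih =>
    intro x r hl he
    rw [fibPhi_cons] at he
    by_cases hc : c = 0
    · rw [if_pos hc] at he
      rcases x with _ | ⟨x0, _ | ⟨x1, x2⟩⟩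
      · simp at hl
      · -- x = [x0]
        rw [List.cons_append, List.cons_append, List.nil_append] at he
        injection he with h1 he
        simp at hl
        omega
      · rw [List.cons_append, List.cons_append, List.cons_append] at he
        injection he with h1 he
        injection he with h2 he
        rcases eq_or_ne x2 [] with hx2 | hx2
        · subst hx2
          refine ⟨[0], ⟨w', by rw [hc]; rfl⟩, ?_⟩
          rw [← h1, ← h2]; rfl
        · have hl2 : x2.getLast? = some 1 := by
            rw [show (x0 :: x1 :: x2) = [x0, x1] ++ x2 by rfl, getLast?_append' hx2] at hl
            exact hl
          obtain ⟨y2, hy2p, hy2e⟩ := ih x2 r hl2 (by simpa using he)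
          refine ⟨0 :: y2, ?_, ?_⟩
          · rw [hc]; exact List.cons_prefix_cons.mpr ⟨rfl, hy2p⟩
          · rw [fibPhi_cons, if_pos rfl, ← h1, ← h2, hy2e]; rfl
    · rw [if_neg hc] at he
      rcases x with _ | ⟨x0, x2⟩
      · simp at hl
      · rw [List.cons_append, List.nil_append, List.cons_append] at he
        injection he with h1 he
        rcases eq_or_ne x2 [] with hx2 | hx2
        · subst hx2; simp at hl; omega
        · have hl2 : x2.getLast? = some 1 := by
            rw [show (x0 :: x2) = [x0] ++ x2 by rfl, getLast?_append' hx2] at hl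
            exact hl
          obtain ⟨y2, hy2p, hy2e⟩ := ih x2 r hl2 he
          refine ⟨c :: y2, List.cons_prefix_cons.mpr ⟨rfl, hy2p⟩, ?_⟩
          rw [fibPhi_cons, if_neg hc, ← h1, hy2e]; rfl

theorem suf_desub : ∀ (w l s : List ℕ), s.head? = some 0 → fibPhi w = l ++ s →
    ∃ w₂, w₂ <:+ w ∧ fibPhi w₂ = s := by
  intro w
  induction w with
  | nil =>
    intro l s hh he
    have hs : s = [] := (List.append_eq_nil_iff.mp he.symm).2
    rw [hs] at hh; simp at hh
  | cons c w' ih =>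
    intro l s hh he
    rw [fibPhi_cons] at he
    rcases l with _ | ⟨l0, l'⟩
    · exact ⟨c :: w', List.suffix_refl _, by rw [fibPhi_cons, he, List.nil_append]⟩
    · by_cases hc : c = 0
      · rw [if_pos hc, List.cons_append, List.cons_append] at he
        injection he with h1 he
        rcases l' with _ | ⟨l1, l''⟩
        · have hs : s = 1 :: fibPhi w' := by simpa using he.symm
          rw [hs] at hh; simp at hh
        · simp only [List.append_eq, List.cons_append, List.nil_append] at he
          injection he with h2 he
          obtain ⟨w₂, hw₂s, hw₂e⟩ := ih l'' s hh (by simpa using he)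
          exact ⟨w₂, hw₂s.trans (List.suffix_cons c w'), hw₂e⟩
      · rw [if_neg hc, List.cons_append, List.cons_append, List.nil_append] at he
        injection he with h1 he
        obtain ⟨w₂, hw₂s, hw₂e⟩ := ih l' s hh (by simpa using he)
        exact ⟨w₂, hw₂s.trans (List.suffix_cons c w'), hw₂e⟩

def uW : ℕ → List ℕ
  | 0 => [0, 1]
  | (k+1) => fibPhi (uW k).reverse

theorem uW_struct (k : ℕ) : ∃ P : List ℕ, P.reverse = P ∧ uW k = 0 :: (P ++ [1]) := by
  induction k with
  | zero => exact ⟨[], rfl, rfl⟩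
  | succ m ih =>
    obtain ⟨P, hP, hu⟩ := ih
    refine ⟨fibPhi P ++ [0], by rw [phiR, hP], ?_⟩
    have hrev : (uW m).reverse = 1 :: (P ++ [0]) := by
      rw [hu, List.reverse_cons, List.reverse_append, hP]
      rfl
    show fibPhi (uW m).reverse = _
    rw [hrev, fibPhi_cons, if_neg one_ne_zero, fibPhi_append]
    simp [fibPhi_cons, fibPhi_nil]

theorem hasBorder_reverse {x : List ℕ} (h : HasBorder x) : HasBorder x.reverse := by
  obtain ⟨y, hne, hlt, hp, hs⟩ := h
  refine ⟨y.reverse, by simpa, by simpa, ?_, ?_⟩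
  · exact List.reverse_prefix.mpr hs
  · exact List.reverse_suffix.mpr hp

theorem hasBorder_phi {y : List ℕ} (h : HasBorder y) : HasBorder (fibPhi y) := by
  obtain ⟨b, hne, hlt, ⟨t, ht⟩, ⟨s, hs⟩⟩ := h
  have htne : t ≠ [] := by
    rintro rfl
    rw [List.append_nil] at ht
    rw [ht] at hlt
    omega
  refine ⟨fibPhi b, fibPhi_ne_nil hne, ?_, ⟨fibPhi t, by rw [← fibPhi_append, ht]⟩,
    ⟨fibPhi s, by rw [← fibPhi_append, hs]⟩⟩
  have h1 : fibPhi y = fibPhi b ++ fibPhi t := by rw [← fibPhi_append, ht]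
  have h2 := List.length_pos_iff.mpr (fibPhi_ne_nil htne)
  rw [h1, List.length_append]
  omega

theorem prefix_getD {y w : List ℕ} (h : y <+: w) {i : ℕ} (hi : i < y.length) :
    y.getD i 0 = w.getD i 0 := by
  obtain ⟨t, rfl⟩ := h
  rw [List.getD_append _ _ _ _ hi]

theorem suffix_getD {y w : List ℕ} (h : y <:+ w) {i : ℕ} (hi : i < y.length) :
    y.getD i 0 = w.getD (w.length - y.length + i) 0 := by
  obtain ⟨s, rfl⟩ := h
  have hlen : (s ++ y).length - y.length + i = s.length + i := by simp
  have h1 : s.length + i < (s ++ y).length := by simp; omega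
  rw [hlen, List.getD_eq_getElem _ _ hi, List.getD_eq_getElem _ _ h1,
    List.getElem_append_right (by omega)]
  congr 1
  omega

theorem pal_getD {P : List ℕ} (hP : P.reverse = P) {i : ℕ} (hi : i < P.length) :
    P.getD i 0 = P.getD (P.length - 1 - i) 0 := by
  have h1 : i < P.reverse.length := by simpa using hi
  have h2 : P.length - 1 - i < P.length := by omega
  rw [List.getD_eq_getElem _ _ (by omega : P.length - 1 - i < P.length),
    show P.getD i 0 = P.reverse.getD i 0 by rw [hP],
    List.getD_eq_getElem _ _ h1, List.getElem_reverse]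

theorem unbordered_aPb {P : List ℕ} (hP : P.reverse = P) :
    ¬ HasBorder (0 :: (P ++ [1])) := by
  rintro ⟨y, hne, hlt, hp, hs⟩
  have hL : (0 :: (P ++ [1])).length = P.length + 2 := by simp
  have hk1 : 1 ≤ y.length := List.length_pos_iff.mpr hne
  have hklt : y.length ≤ P.length + 1 := by rw [hL] at hlt; omega
  set k := y.length with hk
  -- getD facts about w
  have w0 : (0 :: (P ++ [1])).getD 0 0 = 0 := rfl
  have wmid : ∀ j, j < P.length → (0 :: (P ++ [1])).getD (j+1) 0 = P.getD j 0 := by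
    intro j hj
    rw [List.getD_cons_succ, List.getD_append _ _ _ _ hj]
  have wlast : (0 :: (P ++ [1])).getD (P.length + 1) 0 = 1 := by
    rw [List.getD_cons_succ]
    induction P with
    | nil => rfl
    | cons a Q ih => simpa using ih
  -- y's last element
  have e1 : y.getD (k-1) 0 = (0 :: (P ++ [1])).getD (k-1) 0 := prefix_getD hp (by omega)
  have e2 : y.getD (k-1) 0 = (0 :: (P ++ [1])).getD (P.length + 1) 0 := by
    have := suffix_getD hs (i := k - 1) (by omega)
    rw [hL] at this
    rw [this, show P.length + 2 - k + (k-1) = P.length + 1 by omega]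
  -- y's first element
  have e3 : y.getD 0 0 = (0 :: (P ++ [1])).getD 0 0 := prefix_getD hp (by omega)
  have e4 : y.getD 0 0 = (0 :: (P ++ [1])).getD (P.length + 2 - k) 0 := by
    have := suffix_getD hs (i := 0) (by omega)
    rw [hL] at this
    simpa using this
  rcases Nat.lt_or_ge k 2 with hk2 | hk2
  · -- k = 1
    rw [show k - 1 = 0 by omega, wlast] at e2
    rw [w0] at e3
    rw [e3] at e2
    exact absurd e2 (by norm_num)
  · -- 2 ≤ k
    have hA : P.getD (k-2) 0 = 1 := by
      have : (0 :: (P ++ [1])).getD (k-1) 0 = P.getD (k-2) 0 := by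
        rw [show k - 1 = (k-2) + 1 by omega, wmid _ (by omega)]
      rw [← this, ← e1, e2, wlast]
    have hB : P.getD (P.length + 1 - k) 0 = 0 := by
      have : (0 :: (P ++ [1])).getD (P.length + 2 - k) 0 = P.getD (P.length + 1 - k) 0 := by
        rw [show P.length + 2 - k = (P.length + 1 - k) + 1 by omega, wmid _ (by omega)]
      rw [← this, ← e4, e3, w0]
    have := pal_getD hP (i := k - 2) (by omega)
    rw [show P.length - 1 - (k-2) = P.length + 1 - k by omega] at this
    rw [hA, hB] at this
    exact absurd this (by norm_num)

theorem uW_length (k : ℕ) :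
    (uW k).length = Nat.fib (k+3) ∧ (uW k).count 0 = Nat.fib (k+2) := by
  induction k with
  | zero => exact ⟨by decide, by decide⟩
  | succ m ih =>
    obtain ⟨h1, h2⟩ := ih
    constructor
    · show (fibPhi (uW m).reverse).length = _
      rw [length_fibPhi, List.length_reverse, List.count_reverse, h1, h2]
      have := Nat.fib_add_two (n := m+2)
      simp only [show m+2+2 = m+1+3 by omega, show m+2+1 = m+3 by omega] at this
      omega
    · show (fibPhi (uW m).reverse).count 0 = _
      rw [count0_fibPhi, List.length_reverse, h1]

theorem uW_factor (k : ℕ) : ∃ K, uW k <:+: fw K := by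
  induction k with
  | zero =>
    exact ⟨1, by rw [show fw 1 = [0, 1] from rfl]; exact ⟨[], [], rfl⟩⟩
  | succ m ih =>
    obtain ⟨K, hK⟩ := reverse_factor ih
    exact ⟨K+1, by show fibPhi (uW m).reverse <:+: _; exact phi_factor hK⟩

theorem uW_head (k : ℕ) : (uW k).head? = some 0 := by
  obtain ⟨P, hP, hu⟩ := uW_struct k
  rw [hu]; rfl

theorem uW_last (k : ℕ) : (uW k).getLast? = some 1 := by
  obtain ⟨P, hP, hu⟩ := uW_struct k
  have h2 : (0 : ℕ) :: (P ++ [1]) = (0 :: P) ++ [1] := by simp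
  rw [hu, h2, List.getLast?_concat]

theorem uW_unbordered (k : ℕ) : ¬ HasBorder (uW k) := by
  obtain ⟨P, hP, hu⟩ := uW_struct k
  rw [hu]
  exact unbordered_aPb hP

theorem border_of_head_last {y : List ℕ} {c : ℕ} (h2 : 2 ≤ y.length)
    (hh : y.head? = some c) (hl : y.getLast? = some c) : HasBorder y := by
  obtain ⟨t, ht⟩ : ∃ t, y = c :: t := by
    cases y with
    | nil => simp at hh
    | cons a t => simp at hh; exact ⟨t, by rw [hh]⟩
  obtain ⟨s, hs⟩ := List.getLast?_eq_some_iff.mp hl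
  exact ⟨[c], by simp, by simp; omega, ⟨t, ht.symm⟩, ⟨s, hs.symm⟩⟩

theorem main_u : ∀ L x, x.length = L → (∃ k, x <:+: fw k) → ¬ HasBorder x →
    x.head? = some 0 → x.getLast? = some 1 → ∃ m, x = uW m := by
  intro L
  induction L using Nat.strong_induction_on with
  | _ L IH =>
    intro x hxL hfac hub hh hl
    obtain ⟨k, hk⟩ := hfac
    have hxne : x ≠ [] := by rintro rfl; simp at hh
    have hk1 : x <:+: fibPhi (fw k) := by
      rw [← fw_succ]; exact hk.trans (fw_prefix_succ k).isInfix
    obtain ⟨l, r, hlr⟩ := hk1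
    have hlr' : fibPhi (fw k) = l ++ (x ++ r) := by rw [← hlr, List.append_assoc]
    have hhead : (x ++ r).head? = some 0 := by
      cases x with
      | nil => simp at hh
      | cons a t => simp at hh ⊢; simpa using hh
    obtain ⟨w₂, hw₂s, hw₂e⟩ := suf_desub (fw k) l (x ++ r) hhead hlr'
    obtain ⟨y, hyp, hye⟩ := pre_desub w₂ x r hl hw₂e
    have hyfac : y <:+: fw k := hyp.isInfix.trans hw₂s.isInfix
    have hyne : y ≠ [] := by rintro rfl; rw [hye] at hxne; exact hxne rfl
    -- last letter of y is 0
    obtain ⟨y', c, hyc⟩ : ∃ y' c, y = y' ++ [c] := by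
      rcases List.eq_nil_or_concat y with h | ⟨y', c, h⟩
      · exact absurd h hyne
      · exact ⟨y', c, by rw [h, List.concat_eq_append]⟩
    have hc0 : c = 0 := by
      by_contra hc
      have : x.getLast? = some 0 := by
        rw [hye, hyc, fibPhi_append, fibPhi_cons, if_neg hc, fibPhi_nil]
        simp
      rw [this] at hl
      simp at hl
    subst hc0
    have hyub : ¬ HasBorder y := fun hb => hub (hye ▸ hasBorder_phi hb)
    have hylast : y.getLast? = some 0 := by rw [hyc]; simp
    have hcount : 1 ≤ y.count 0 := by
      rw [hyc, List.count_append]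
      simp
    have hxy : y.length < x.length := by
      rw [hye, length_fibPhi]
      omega
    rcases Nat.lt_or_ge y.length 2 with hy1 | hy2
    · -- y = [0]
      have : y = [0] := by
        rw [hyc] at hy1 ⊢
        have : y'.length = 0 := by simp only [List.length_append, List.length_singleton] at hy1; omega
        rw [List.length_eq_zero_iff.mp this]; rfl
      refine ⟨0, ?_⟩
      rw [hye, this]; rfl
    · -- head of y is 1
      have hyhead : ∃ c', y.head? = some c' := by
        cases y with
        | nil => exact absurd rfl hyne
        | cons a t => exact ⟨a, rfl⟩
      obtain ⟨c', hc'⟩ := hyhead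
      have hc'mem : c' ∈ y := by
        cases y with
        | nil => simp at hc'
        | cons a t => simp at hc'; simp [hc']
      have hc'01 : c' = 0 ∨ c' = 1 := mem_fw (hyfac.subset hc'mem)
      have hc'1 : c' = 1 := by
        rcases hc'01 with h | h
        · exact absurd (border_of_head_last hy2 (h ▸ hc') hylast) hyub
        · exact h
      -- apply IH to y.reverse
      have hrev := IH y.length (by omega) y.reverse (by simp) (reverse_factor ⟨k, hyfac⟩)
        (fun hb => hyub (by simpa using hasBorder_reverse hb))
        (by rw [List.head?_reverse, hylast])
        (by rw [List.getLast?_reverse, hc', hc'1])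
      obtain ⟨m, hm⟩ := hrev
      refine ⟨m + 1, ?_⟩
      rw [hye, show uW (m+1) = fibPhi (uW m).reverse from rfl, ← hm, List.reverse_reverse]

theorem fib_strict {m n : ℕ} (h2 : 2 ≤ m) (h : m < n) : Nat.fib m < Nat.fib n := by
  induction n with
  | zero => omega
  | succ k ih =>
    rcases Nat.lt_or_ge m k with h' | h'
    · exact lt_of_lt_of_le (ih h') (Nat.fib_mono (by omega))
    · have : m = k := by omega
      subst this
      exact Nat.fib_lt_fib_succ h2

theorem fib_inj {m n : ℕ} (hm : 2 ≤ m) (hn : 2 ≤ n) (h : Nat.fib m = Nat.fib n) :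
    m = n := by
  rcases Nat.lt_trichotomy m n with h' | h' | h'
  · exact absurd h (Nat.ne_of_lt (fib_strict hm h'))
  · exact h'
  · exact absurd h.symm (Nat.ne_of_lt (fib_strict hn h'))

theorem reverse_unbordered {x : List ℕ} (h : ¬ HasBorder x) : ¬ HasBorder x.reverse :=
  fun hb => h (by simpa using hasBorder_reverse hb)

theorem classify {x : List ℕ} (hfac : IsFibFactor x) (hub : ¬ HasBorder x)
    (h2 : 2 ≤ x.length) : (∃ m, x = uW m) ∨ (∃ m, x = (uW m).reverse) := by
  obtain ⟨k, hk⟩ := isFactor_iff.mp hfac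
  have hxne : x ≠ [] := by rintro rfl; simp at h2
  obtain ⟨a, x1, hx1⟩ : ∃ a x1, x = a :: x1 := by
    cases x with
    | nil => exact absurd rfl hxne
    | cons a t => exact ⟨a, t, rfl⟩
  obtain ⟨x2, c, hx2⟩ : ∃ x2 c, x = x2 ++ [c] := by
    rcases List.eq_nil_or_concat x with h | ⟨x2, c, h⟩
    · exact absurd h hxne
    · exact ⟨x2, c, by rw [h, List.concat_eq_append]⟩
  have hh : x.head? = some a := by rw [hx1]; rfl
  have ht : x.getLast? = some c := by rw [hx2]; simp
  have hamem : a ∈ x := by rw [hx1]; simp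
  have hcmem : c ∈ x := by rw [hx2]; simp
  have ha01 : a = 0 ∨ a = 1 := mem_fw (hk.subset hamem)
  have hc01 : c = 0 ∨ c = 1 := mem_fw (hk.subset hcmem)
  have hne : a ≠ c := fun he => hub (border_of_head_last h2 hh (he ▸ ht))
  rcases ha01 with ha | ha <;> rcases hc01 with hc | hc
  · exact absurd (ha.trans hc.symm) hne
  · left
    exact main_u x.length x rfl ⟨k, hk⟩ hub (ha ▸ hh) (hc ▸ ht)
  · right
    obtain ⟨m, hm⟩ := main_u x.reverse.length x.reverse rfl (reverse_factor ⟨k, hk⟩)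
      (reverse_unbordered hub)
      (by rw [List.head?_reverse, ht, hc])
      (by rw [List.getLast?_reverse, hh, ha])
    exact ⟨m, by rw [← hm, List.reverse_reverse]⟩
  · exact absurd (ha.trans hc.symm) hne

theorem uW_isFactor (k : ℕ) : IsFibFactor (uW k) := isFactor_iff.mpr (uW_factor k)

theorem uW_rev_isFactor (k : ℕ) : IsFibFactor (uW k).reverse :=
  isFactor_iff.mpr (reverse_factor (uW_factor k))

theorem uW_ne_rev (k : ℕ) : uW k ≠ (uW k).reverse := by
  intro h
  have h1 := uW_head k
  have h2 : (uW k).reverse.head? = some 1 := by rw [List.head?_reverse, uW_last]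
  rw [← h] at h2
  rw [h1] at h2
  simp at h2

theorem unbordered_set_eq (k : ℕ) :
    {x : List ℕ | IsFibFactor x ∧ x.length = Nat.fib (k+3) ∧ ¬ HasBorder x} =
      {uW k, (uW k).reverse} := by
  ext x
  simp only [Set.mem_setOf_eq, Set.mem_insert_iff, Set.mem_singleton_iff]
  constructor
  · rintro ⟨hfac, hlen, hub⟩
    have h2 : 2 ≤ x.length := by
      rw [hlen]
      calc 2 = Nat.fib 3 := by decide
        _ ≤ Nat.fib (k+3) := Nat.fib_mono (by omega)
    rcases classify hfac hub h2 with ⟨m, hm⟩ | ⟨m, hm⟩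
    · left
      have : Nat.fib (m+3) = Nat.fib (k+3) := by
        rw [← (uW_length m).1, ← hm, hlen]
      have := fib_inj (by omega) (by omega) this
      rw [hm, show m = k by omega]
    · right
      have : Nat.fib (m+3) = Nat.fib (k+3) := by
        rw [← (uW_length m).1, ← List.length_reverse, ← hm, hlen]
      have := fib_inj (by omega) (by omega) this
      rw [hm, show m = k by omega]
  · rintro (rfl | rfl)
    · exact ⟨uW_isFactor k, (uW_length k).1, uW_unbordered k⟩
    · exact ⟨uW_rev_isFactor k, by rw [List.length_reverse]; exact (uW_length k).1,
        reverse_unbordered (uW_unbordered k)⟩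

theorem unbordered_of_length_one {x : List ℕ} (h : x.length = 1) : ¬ HasBorder x := by
  rintro ⟨y, hne, hlt, _, _⟩
  rw [h] at hlt
  exact hne (List.length_eq_zero_iff.mp (by omega))

theorem factor_zero : IsFibFactor [0] := by
  refine ⟨0, ?_⟩
  have h : fibWord (0 + 0) = 0 := by decide
  show _ = List.map _ (List.range 1)
  rw [show List.range 1 = [0] from rfl, List.map_singleton, h]

theorem factor_one : IsFibFactor [1] := by
  refine ⟨1, ?_⟩
  have h : fibWord (1 + 0) = 1 := by decide
  show _ = List.map _ (List.range 1)
  rw [show List.range 1 = [0] from rfl, List.map_singleton, h]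

theorem length_one_set :
    {x : List ℕ | IsFibFactor x ∧ x.length = 1 ∧ ¬ HasBorder x} = {[0], [1]} := by
  ext x
  simp only [Set.mem_setOf_eq, Set.mem_insert_iff, Set.mem_singleton_iff]
  constructor
  · rintro ⟨hfac, hlen, -⟩
    obtain ⟨c, rfl⟩ := List.length_eq_one_iff.mp hlen
    obtain ⟨k, hk⟩ := isFactor_iff.mp hfac
    rcases mem_fw (hk.subset (by simp : c ∈ [c])) with h | h
    · left; rw [h]
    · right; rw [h]
  · rintro (rfl | rfl)
    · exact ⟨factor_zero, rfl, unbordered_of_length_one rfl⟩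
    · exact ⟨factor_one, rfl, unbordered_of_length_one rfl⟩

end FibAux

/-- The nonempty unbordered factors of the Fibonacci word have lengths exactly
the F_n for n ≥ 2; there are exactly two of each such length, and for n ≥ 3
the two unbordered factors of length F_n are reversals of each other. -/
theorem fibWord_unbordered_factors :
    (∀ x : List ℕ, IsFibFactor x → x ≠ [] → ¬ HasBorder x →
      ∃ n : ℕ, 2 ≤ n ∧ x.length = Nat.fib n) ∧
    (∀ n : ℕ, 2 ≤ n →
      {x : List ℕ | IsFibFactor x ∧ x.length = Nat.fib n ∧ ¬ HasBorder x}.ncard = 2) ∧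
    (∀ n : ℕ, 3 ≤ n → ∀ x y : List ℕ,
      IsFibFactor x → x.length = Nat.fib n → ¬ HasBorder x →
      IsFibFactor y → y.length = Nat.fib n → ¬ HasBorder y →
      x ≠ y → y = x.reverse) := by
    open FibAux in
  refine ⟨?_, ?_, ?_⟩
  · intro x hfac hne hub
    rcases Nat.lt_or_ge x.length 2 with h1 | h2
    · have : x.length = 1 := by
        have := List.length_pos_iff.mpr hne
        omega
      exact ⟨2, le_refl 2, by rw [this]; decide⟩
    · rcases classify hfac hub h2 with ⟨m, hm⟩ | ⟨m, hm⟩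
      · exact ⟨m + 3, by omega, by rw [hm, (uW_length m).1]⟩
      · exact ⟨m + 3, by omega, by rw [hm, List.length_reverse, (uW_length m).1]⟩
  · intro n hn
    rcases Nat.lt_or_ge n 3 with h3 | h3
    · have : n = 2 := by omega
      subst this
      rw [show Nat.fib 2 = 1 by decide, length_one_set]
      exact Set.ncard_pair (by simp)
    · obtain ⟨k, rfl⟩ : ∃ k, n = k + 3 := ⟨n - 3, by omega⟩
      rw [unbordered_set_eq k]
      exact Set.ncard_pair (uW_ne_rev k)
  · intro n h3 x y hxf hxl hxu hyf hyl hyu hxy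
    obtain ⟨k, rfl⟩ : ∃ k, n = k + 3 := ⟨n - 3, by omega⟩
    have hx : x ∈ ({uW k, (uW k).reverse} : Set (List ℕ)) := by
      rw [← unbordered_set_eq k]; exact ⟨hxf, hxl, hxu⟩
    have hy : y ∈ ({uW k, (uW k).reverse} : Set (List ℕ)) := by
      rw [← unbordered_set_eq k]; exact ⟨hyf, hyl, hyu⟩
    simp only [Set.mem_insert_iff, Set.mem_singleton_iff] at hx hy
    rcases hx with rfl | rfl <;> rcases hy with rfl | rfl
    · exact absurd rfl hxy
    · rfl
    · rw [List.reverse_reverse]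
    · exact absurd rfl hxy
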